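/- Let κ : ℝ → ℝ be real analytic with exp(2πi·κ(t)) = 1 + 2ϑ'(t)·ζ(1/2+it)/ζ'(1/2+it) and κ(0) = −1/2. Then κ(t) + 1/2 is an odd function, i.e. κ(−t) = −κ(t) − 1 for all real t. -/

import Mathlib

open Complex Real


lemma hasDerivAt_conj_conj {f : ℂ → ℂ} {d z : ℂ} (h : HasDerivAt f d z) :
    HasDerivAt (fun w => (starRingEnd ℂ) (f ((starRingEnd ℂ) w))) ((starRingEnd ℂ) d)
      ((starRingEnd ℂ) z) := by
  have hcfun : (fun w : ℂ => (starRingEnd ℂ) w) = ⇑Complex.conjCLE := by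
    funext w; simp [Complex.conjCLE_apply]
  have hconj : ∀ x : ℂ, HasFDerivAt (fun w : ℂ => (starRingEnd ℂ) w)
      (Complex.conjCLE : ℂ →L[ℝ] ℂ) x := by
    intro x
    rw [hcfun]
    exact Complex.conjCLE.hasFDerivAt
  set L := (ContinuousLinearMap.smulRight (1 : ℂ →L[ℂ] ℂ) d).restrictScalars ℝ with hL
  have h1 : HasFDerivAt f L z := h.hasFDerivAt.restrictScalars ℝ
  have hz : (starRingEnd ℂ) ((starRingEnd ℂ) z) = z := Complex.conj_conj z
  have h2 : HasFDerivAt (fun w => f ((starRingEnd ℂ) w))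
      (L.comp (Complex.conjCLE : ℂ →L[ℝ] ℂ)) ((starRingEnd ℂ) z) := by
    refine HasFDerivAt.comp _ ?_ (hconj _)
    rw [hz]; exact h1
  have h3 : HasFDerivAt (fun w => (starRingEnd ℂ) (f ((starRingEnd ℂ) w)))
      ((Complex.conjCLE : ℂ →L[ℝ] ℂ).comp (L.comp (Complex.conjCLE : ℂ →L[ℝ] ℂ)))
      ((starRingEnd ℂ) z) := HasFDerivAt.comp _ (hconj _) h2
  have H : (ContinuousLinearMap.smulRight (1 : ℂ →L[ℂ] ℂ) ((starRingEnd ℂ) d)).restrictScalars ℝ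
      = (Complex.conjCLE : ℂ →L[ℝ] ℂ).comp (L.comp (Complex.conjCLE : ℂ →L[ℝ] ℂ)) := by
    apply ContinuousLinearMap.ext
    intro w
    simp [hL, Complex.conjCLE_apply, mul_comm]
  have h4 := hasFDerivAt_of_restrictScalars ℝ h3 H
  simpa using h4.hasDerivAt


lemma zeta_real_conj {x : ℝ} (hx : 1 < x) :
    (starRingEnd ℂ) (riemannZeta x) = riemannZeta x := by
  rw [zeta_eq_tsum_one_div_nat_cpow (by rwa [Complex.ofReal_re] : 1 < (x : ℂ).re)]
  rw [starRingEnd_apply, tsum_star]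
  refine tsum_congr fun n => ?_
  rw [← starRingEnd_apply]
  have h1 : ((n : ℂ) ^ (x : ℂ)) = (((n : ℝ) ^ x : ℝ) : ℂ) := by
    rw [Complex.ofReal_cpow (Nat.cast_nonneg n), Complex.ofReal_natCast]
  rw [h1, map_div₀, map_one, Complex.conj_ofReal]

lemma compl_one_preconnected : IsPreconnected ({(1 : ℂ)}ᶜ : Set ℂ) :=
  (isConnected_compl_singleton_of_one_lt_rank
    (by simp) 1).isPreconnected

lemma zeta_conj {s : ℂ} (hs : s ≠ 1) :
    riemannZeta ((starRingEnd ℂ) s) = (starRingEnd ℂ) (riemannZeta s) := by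
  have key : ∀ w : ℂ, w ≠ 1 →
      (starRingEnd ℂ) (riemannZeta ((starRingEnd ℂ) w)) - riemannZeta w = 0 := by
    have hUopen : IsOpen ({(1 : ℂ)}ᶜ : Set ℂ) := isOpen_compl_singleton
    have hG : AnalyticOnNhd ℂ
        (fun w => (starRingEnd ℂ) (riemannZeta ((starRingEnd ℂ) w)) - riemannZeta w)
        ({(1 : ℂ)}ᶜ : Set ℂ) := by
      apply DifferentiableOn.analyticOnNhd _ hUopen
      intro w hw
      have hw1 : w ≠ 1 := hw
      have hcw : (starRingEnd ℂ) w ≠ 1 := by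
        intro h
        exact hw1 (by rw [← Complex.conj_conj w, h, map_one])
      have hd := hasDerivAt_conj_conj ((differentiableAt_riemannZeta hcw).hasDerivAt)
      rw [Complex.conj_conj] at hd
      exact (hd.differentiableAt.sub (differentiableAt_riemannZeta hw1)).differentiableWithinAt
    have hfreq : ∃ᶠ z in nhdsWithin (2 : ℂ) {(2 : ℂ)}ᶜ,
        (starRingEnd ℂ) (riemannZeta ((starRingEnd ℂ) z)) - riemannZeta z = 0 := by
      have htend : Filter.Tendsto (fun n : ℕ => ((2 + 1 / (n + 1) : ℝ) : ℂ)) Filter.atTop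
          (nhdsWithin (2 : ℂ) {(2 : ℂ)}ᶜ) := by
        rw [tendsto_nhdsWithin_iff]
        constructor
        · have : Filter.Tendsto (fun n : ℕ => (2 + 1 / (n + 1) : ℝ)) Filter.atTop (nhds 2) := by
            have h0 : Filter.Tendsto (fun n : ℕ => 1 / ((n : ℝ) + 1)) Filter.atTop (nhds 0) :=
              tendsto_one_div_add_atTop_nhds_zero_nat
            have := h0.const_add (2 : ℝ)
            simpa using this
          exact (Complex.continuous_ofReal.tendsto 2).comp this
        · refine Filter.Eventually.of_forall fun n => ?_
          simp only [Set.mem_compl_iff, Set.mem_singleton_iff]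
          intro h
          have h2 : (2 + 1 / (n + 1) : ℝ) = 2 := by exact_mod_cast h
          have : (1 : ℝ) / (n + 1) > 0 := by positivity
          linarith
      refine htend.frequently (Filter.Frequently.of_forall fun n => ?_)
      have hx : (1 : ℝ) < 2 + 1 / (n + 1) := by
        have : (0:ℝ) < 1 / (n + 1) := by positivity
        linarith
      rw [Complex.conj_ofReal, zeta_real_conj hx, sub_self]
    have := hG.eqOn_zero_of_preconnected_of_frequently_eq_zero compl_one_preconnected
      (by norm_num : (2 : ℂ) ∈ ({(1 : ℂ)}ᶜ : Set ℂ)) hfreq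
    intro w hw
    exact this hw
  have h0 := sub_eq_zero.mp (key s hs)
  calc riemannZeta ((starRingEnd ℂ) s)
      = (starRingEnd ℂ) ((starRingEnd ℂ) (riemannZeta ((starRingEnd ℂ) s))) := by
        rw [Complex.conj_conj]
    _ = (starRingEnd ℂ) (riemannZeta s) := by rw [h0]

lemma deriv_zeta_conj {s : ℂ} (hs : s ≠ 1) :
    deriv riemannZeta ((starRingEnd ℂ) s) = (starRingEnd ℂ) (deriv riemannZeta s) := by
  have hd := hasDerivAt_conj_conj ((differentiableAt_riemannZeta hs).hasDerivAt)
  have hcs : (starRingEnd ℂ) s ≠ 1 := by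
    intro h; exact hs (by rw [← Complex.conj_conj s, h, map_one])
  have heq : riemannZeta =ᶠ[nhds ((starRingEnd ℂ) s)]
      (fun w => (starRingEnd ℂ) (riemannZeta ((starRingEnd ℂ) w))) := by
    filter_upwards [eventually_ne_nhds hcs] with w hw
    have hw1 : (starRingEnd ℂ) w ≠ 1 := by
      intro h; exact hw (by rw [← Complex.conj_conj w, h, map_one])
    rw [zeta_conj (by intro h; exact hw1 (by rw [h, map_one]) : w ≠ 1), Complex.conj_conj]
  exact (hd.congr_of_eventuallyEq heq).deriv
lemma line_ne_one (t : ℝ) : (1 / 2 + Complex.I * (t : ℂ)) ≠ 1 := by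
  intro h
  have := congrArg Complex.re h
  simp [Complex.add_re, Complex.mul_re] at this

lemma zeta_analyticOnNhd : AnalyticOnNhd ℂ riemannZeta ({(1 : ℂ)}ᶜ : Set ℂ) := by
  apply DifferentiableOn.analyticOnNhd _ isOpen_compl_singleton
  intro w hw
  exact (differentiableAt_riemannZeta hw).differentiableWithinAt

lemma eq_zero_on_compl {g : ℂ → ℂ} (hg : AnalyticOnNhd ℂ g ({(1 : ℂ)}ᶜ : Set ℂ))
    (h0 : ∀ t : ℝ, g (1 / 2 + Complex.I * (t : ℂ)) = 0) {s : ℂ} (hs : s ≠ 1) : g s = 0 := by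
  have hfreq : ∃ᶠ z in nhdsWithin ((1 : ℂ) / 2) {((1 : ℂ) / 2)}ᶜ, g z = 0 := by
    have htend : Filter.Tendsto (fun n : ℕ => (1 / 2 + Complex.I * ((1 / (n + 1) : ℝ) : ℂ)))
        Filter.atTop (nhdsWithin ((1 : ℂ) / 2) {((1 : ℂ) / 2)}ᶜ) := by
      rw [tendsto_nhdsWithin_iff]
      constructor
      · have h0' : Filter.Tendsto (fun n : ℕ => (1 / (n + 1) : ℝ)) Filter.atTop (nhds 0) :=
          tendsto_one_div_add_atTop_nhds_zero_nat
        have h1 : Filter.Tendsto (fun n : ℕ => ((1 / (n + 1) : ℝ) : ℂ)) Filter.atTop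
            (nhds (0 : ℂ)) := by
          have := (Complex.continuous_ofReal.tendsto 0).comp h0'
          simpa [Function.comp_def, one_div] using this
        have := (h1.const_mul (Complex.I)).const_add (1 / 2 : ℂ)
        simpa using this
      · refine Filter.Eventually.of_forall fun n => ?_
        simp only [Set.mem_compl_iff, Set.mem_singleton_iff]
        intro h
        have h2 : Complex.I * ((1 / (n + 1) : ℝ) : ℂ) = 0 := by
          have := sub_eq_zero.mpr h
          simpa using this
        rcases mul_eq_zero.mp h2 with h3 | h3
        · exact Complex.I_ne_zero h3
        · rw [Complex.ofReal_eq_zero] at h3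
          have : (0:ℝ) < 1 / (n + 1) := by positivity
          linarith
    exact htend.frequently (Filter.Frequently.of_forall fun n => h0 _)
  have hmem : ((1 : ℂ) / 2) ∈ ({(1 : ℂ)}ᶜ : Set ℂ) := by norm_num
  exact hg.eqOn_zero_of_preconnected_of_frequently_eq_zero compl_one_preconnected hmem hfreq hs

lemma zeta_line_not_all_zero : ¬ ∀ t : ℝ, riemannZeta (1 / 2 + Complex.I * (t : ℂ)) = 0 := by
  intro h
  have h2 : riemannZeta 2 = 0 :=
    eq_zero_on_compl zeta_analyticOnNhd h (by norm_num)
  rw [riemannZeta_two] at h2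
  have : (π : ℂ) = 0 := by
    field_simp at h2
    exact (pow_eq_zero_iff two_ne_zero).mp (by simpa using h2)
  rw [Complex.ofReal_eq_zero] at this
  exact Real.pi_ne_zero this

lemma deriv_zeta_line_not_all_zero :
    ¬ ∀ t : ℝ, deriv riemannZeta (1 / 2 + Complex.I * (t : ℂ)) = 0 := by
  intro h
  have hd : ∀ s : ℂ, s ≠ 1 → deriv riemannZeta s = 0 :=
    fun s hs => eq_zero_on_compl zeta_analyticOnNhd.deriv h hs
  -- ζ is constant on the half-plane re > 1
  have hVopen : IsOpen {z : ℂ | 1 < z.re} := isOpen_lt continuous_const Complex.continuous_re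
  have hVconv : Convex ℝ {z : ℂ | 1 < z.re} := convex_halfSpace_re_gt 1
  have hne : ∀ z ∈ {z : ℂ | 1 < z.re}, z ≠ 1 := by
    intro z hz h1
    rw [h1] at hz
    simp at hz
  have hdiff : DifferentiableOn ℂ riemannZeta {z : ℂ | 1 < z.re} := fun z hz =>
    (differentiableAt_riemannZeta (hne z hz)).differentiableWithinAt
  have hfd : ∀ z ∈ {z : ℂ | 1 < z.re}, fderivWithin ℂ riemannZeta {z : ℂ | 1 < z.re} z = 0 := by
    intro z hz
    rw [fderivWithin_of_isOpen hVopen hz]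
    have hda := (differentiableAt_riemannZeta (hne z hz)).hasDerivAt
    rw [hd z (hne z hz)] at hda
    have := (hasDerivAt_iff_hasFDerivAt.mp hda).fderiv
    rw [this]
    ext w
    simp
  have h24 : riemannZeta 2 = riemannZeta 4 :=
    hVconv.is_const_of_fderivWithin_eq_zero hdiff hfd (by norm_num) (by norm_num)
  rw [riemannZeta_two, riemannZeta_four] at h24
  have hre : (π : ℝ) ^ 2 / 6 = π ^ 4 / 90 := by exact_mod_cast h24
  have e : π ^ 2 * (π ^ 2 - 15) = 0 := by linear_combination -90 * hre
  rcases mul_eq_zero.mp e with h1 | h1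
  · nlinarith [Real.pi_gt_three]
  · have h2 : π ^ 2 = 15 := by linarith
    nlinarith [Real.pi_lt_d2, Real.pi_gt_three]
lemma conj_line (t : ℝ) :
    (starRingEnd ℂ) (1 / 2 + Complex.I * (t : ℂ)) = 1 / 2 + Complex.I * ((-t : ℝ) : ℂ) := by
  rw [map_add, map_mul, Complex.conj_I, Complex.conj_ofReal]
  push_cast
  have : (starRingEnd ℂ) (1 / 2 : ℂ) = 1 / 2 := by
    rw [map_div₀, map_one, map_ofNat]
  rw [this]
  ring

lemma exp_one_everywhere {f : ℝ → ℝ} (hf : ∀ t, AnalyticAt ℝ f t) (c : ℂ) {t₀ : ℝ}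
    (h0 : ∀ᶠ t in nhds t₀, Complex.exp (c * (f t : ℂ)) = 1) :
    ∀ t, Complex.exp (c * (f t : ℂ)) = 1 := by
  have hg : AnalyticOnNhd ℝ (fun t : ℝ => Complex.exp (c * (f t : ℂ)) - 1) Set.univ := by
    intro t _
    have hin : AnalyticAt ℝ (fun t : ℝ => c * (f t : ℂ)) t :=
      analyticAt_const.mul ((Complex.ofRealCLM.analyticAt (f t)).comp (hf t))
    exact ((analyticAt_cexp.restrictScalars.comp hin)).sub analyticAt_const
  have hzero := hg.eqOn_zero_of_preconnected_of_eventuallyEq_zero isPreconnected_univ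
    (Set.mem_univ t₀) (by filter_upwards [h0] with t ht; simp [ht])
  intro t
  have := hzero (Set.mem_univ t)
  simpa [sub_eq_zero] using this

lemma deriv_zero_of_exp_one {f : ℝ → ℝ} {c : ℂ} (hc : c ≠ 0)
    (h1 : ∀ t, Complex.exp (c * (f t : ℂ)) = 1) {d t : ℝ} (hd : HasDerivAt f d t) : d = 0 := by
  have hinner : HasDerivAt (fun t : ℝ => c * (f t : ℂ)) (c * (d : ℂ)) t :=
    (hd.ofReal_comp).const_mul c
  have h2 : HasDerivAt (fun t : ℝ => Complex.exp (c * (f t : ℂ)))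
      (Complex.exp (c * (f t : ℂ)) * (c * (d : ℂ))) t := hinner.cexp
  have h3 : (fun t : ℝ => Complex.exp (c * (f t : ℂ))) = fun _ => (1 : ℂ) := funext h1
  have h4 := h2.deriv
  rw [h3, deriv_const] at h4
  have h5 : Complex.exp (c * (f t : ℂ)) * (c * (d : ℂ)) = 0 := h4.symm
  simp only [mul_eq_zero, Complex.exp_ne_zero, false_or] at h5
  rcases h5 with h6 | h6
  · exact absurd h6 hc
  · exact_mod_cast h6
theorem kappa_add_half_odd
    (Z ϑ ϑ' κ : ℝ → ℝ)
    (hZa : ∀ t : ℝ, AnalyticAt ℝ Z t) (hϑa : ∀ t : ℝ, AnalyticAt ℝ ϑ t)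
    (hκa : ∀ t : ℝ, AnalyticAt ℝ κ t)
    (hRS : ∀ t : ℝ, riemannZeta (1 / 2 + Complex.I * (t : ℂ)) =
      (Z t : ℂ) * Complex.exp (-Complex.I * (ϑ t : ℂ)))
    (hϑ' : ∀ t : ℝ, HasDerivAt ϑ (ϑ' t) t)
    (hκ : ∀ t : ℝ, deriv riemannZeta (1 / 2 + Complex.I * (t : ℂ)) ≠ 0 →
      Complex.exp (2 * π * Complex.I * (κ t : ℂ)) =
        1 + 2 * (ϑ' t : ℂ) * riemannZeta (1 / 2 + Complex.I * (t : ℂ)) /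
          deriv riemannZeta (1 / 2 + Complex.I * (t : ℂ)))
    (hκ0 : κ 0 = -(1 / 2)) :
    ∀ t : ℝ, κ (-t) = -κ t - 1 := by
  -- Step 1: ϑ' is even
  have hθf : ∀ t : ℝ, AnalyticAt ℝ (fun t : ℝ => ϑ t + ϑ (-t)) t := fun t =>
    (hϑa t).add ((hϑa (-t)).comp analyticAt_id.neg)
  have hZconj : ∀ t : ℝ, (Z (-t) : ℂ) * Complex.exp (-Complex.I * ((ϑ (-t) : ℝ) : ℂ))
      = (Z t : ℂ) * Complex.exp (Complex.I * (ϑ t : ℂ)) := by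
    intro t
    have h1 := hRS (-t)
    rw [← conj_line t, zeta_conj (line_ne_one t), hRS t] at h1
    rw [map_mul, Complex.conj_ofReal, ← Complex.exp_conj] at h1
    have hc : (starRingEnd ℂ) (-Complex.I * (ϑ t : ℂ)) = Complex.I * (ϑ t : ℂ) := by
      rw [map_mul, map_neg, Complex.conj_I, Complex.conj_ofReal]; ring
    rw [hc] at h1
    exact h1.symm
  have hkey : ∀ t : ℝ, (Z (-t) : ℂ)
      = (Z t : ℂ) * Complex.exp (Complex.I * ((ϑ t + ϑ (-t) : ℝ) : ℂ)) := by
    intro t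
    have h1 := hZconj t
    have h2 : Complex.exp (-Complex.I * ((ϑ (-t) : ℝ) : ℂ))
        * Complex.exp (Complex.I * ((ϑ (-t) : ℝ) : ℂ)) = 1 := by
      rw [← Complex.exp_add]
      norm_num
    calc (Z (-t) : ℂ)
        = (Z (-t) : ℂ) * (Complex.exp (-Complex.I * ((ϑ (-t) : ℝ) : ℂ))
          * Complex.exp (Complex.I * ((ϑ (-t) : ℝ) : ℂ))) := by rw [h2, mul_one]
      _ = ((Z (-t) : ℂ) * Complex.exp (-Complex.I * ((ϑ (-t) : ℝ) : ℂ)))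
          * Complex.exp (Complex.I * ((ϑ (-t) : ℝ) : ℂ)) := by ring
      _ = (Z t : ℂ) * Complex.exp (Complex.I * (ϑ t : ℂ))
          * Complex.exp (Complex.I * ((ϑ (-t) : ℝ) : ℂ)) := by rw [h1]
      _ = (Z t : ℂ) * Complex.exp (Complex.I * ((ϑ t + ϑ (-t) : ℝ) : ℂ)) := by
          rw [mul_assoc, ← Complex.exp_add]
          push_cast
          ring_nf
  obtain ⟨t₁, ht₁⟩ : ∃ t : ℝ, Z t ≠ 0 := by
    by_contra hall
    push_neg at hall
    apply zeta_line_not_all_zero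
    intro t
    rw [hRS t, hall t]
    simp
  have hev : ∀ᶠ t in nhds t₁,
      Complex.exp ((2 * Complex.I) * ((ϑ t + ϑ (-t) : ℝ) : ℂ)) = 1 := by
    filter_upwards [(hZa t₁).continuousAt.eventually_ne ht₁] with t hZt
    have hZtC : (Z t : ℂ) ≠ 0 := Complex.ofReal_ne_zero.mpr hZt
    have hr : Complex.exp (Complex.I * ((ϑ t + ϑ (-t) : ℝ) : ℂ)) = (Z (-t) : ℂ) / (Z t : ℂ) := by
      rw [eq_div_iff hZtC]
      linear_combination (hkey t).symm
    have habs : ‖Complex.exp (Complex.I * ((ϑ t + ϑ (-t) : ℝ) : ℂ))‖ = 1 := by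
      rw [mul_comm]
      exact Complex.norm_exp_ofReal_mul_I _
    have hcast : (Z (-t) : ℂ) / (Z t : ℂ) = ((Z (-t) / Z t : ℝ) : ℂ) := by push_cast; ring
    rw [hr, hcast, Complex.norm_real, Real.norm_eq_abs] at habs
    have hsq : (Z (-t) / Z t) ^ 2 = 1 := by
      rw [← _root_.sq_abs, habs]; norm_num
    have h2 : Complex.exp ((2 * Complex.I) * ((ϑ t + ϑ (-t) : ℝ) : ℂ))
        = (Complex.exp (Complex.I * ((ϑ t + ϑ (-t) : ℝ) : ℂ))) ^ 2 := by
      rw [sq, ← Complex.exp_add]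
      ring_nf
    rw [h2, hr, hcast]
    rw [← Complex.ofReal_pow, hsq]
    norm_num
  have hf1 := exp_one_everywhere hθf (2 * Complex.I) hev
  have hθeven : ∀ t : ℝ, ϑ' (-t) = ϑ' t := by
    intro t
    have hd : HasDerivAt (fun t : ℝ => ϑ t + ϑ (-t)) (ϑ' t + ϑ' (-t) * (-1)) t :=
      (hϑ' t).add ((hϑ' (-t)).comp t (hasDerivAt_neg' t))
    have h0 := deriv_zero_of_exp_one (mul_ne_zero two_ne_zero Complex.I_ne_zero) hf1 hd
    linarith
  -- Step 2: κ t + κ (-t) is constant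
  obtain ⟨t₀, ht₀⟩ : ∃ t : ℝ, deriv riemannZeta (1 / 2 + Complex.I * (t : ℂ)) ≠ 0 := by
    by_contra hall
    push_neg at hall
    exact deriv_zeta_line_not_all_zero hall
  have hcont : ContinuousAt (fun t : ℝ => deriv riemannZeta (1 / 2 + Complex.I * (t : ℂ))) t₀ := by
    have h1 : AnalyticAt ℂ (deriv riemannZeta) (1 / 2 + Complex.I * (t₀ : ℂ)) :=
      zeta_analyticOnNhd.deriv _ (line_ne_one t₀)
    have h2 : ContinuousAt (fun t : ℝ => (1 / 2 + Complex.I * (t : ℂ))) t₀ := by fun_prop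
    exact ContinuousAt.comp (g := deriv riemannZeta)
      (f := fun t : ℝ => (1 / 2 + Complex.I * (t : ℂ))) h1.continuousAt h2
  have hevH : ∀ᶠ t in nhds t₀,
      Complex.exp ((2 * (π : ℂ) * Complex.I) * ((κ t + κ (-t) : ℝ) : ℂ)) = 1 := by
    filter_upwards [hcont.eventually_ne ht₀] with t hne
    have hne' : deriv riemannZeta (1 / 2 + Complex.I * ((-t : ℝ) : ℂ)) ≠ 0 := by
      rw [← conj_line t, deriv_zeta_conj (line_ne_one t)]
      intro h
      apply hne
      have := congrArg (starRingEnd ℂ) h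
      rwa [Complex.conj_conj, map_zero] at this
    have hX := hκ t hne
    have hXm := hκ (-t) hne'
    have hconjX : Complex.exp (2 * (π : ℂ) * Complex.I * ((κ (-t) : ℝ) : ℂ))
        = (starRingEnd ℂ) (Complex.exp (2 * (π : ℂ) * Complex.I * ((κ t : ℝ) : ℂ))) := by
      rw [hXm, hX, hθeven t]
      rw [show ((1 : ℂ) / 2 + Complex.I * ((-t : ℝ) : ℂ))
            = (starRingEnd ℂ) (1 / 2 + Complex.I * (t : ℂ)) from (conj_line t).symm]
      rw [zeta_conj (line_ne_one t), deriv_zeta_conj (line_ne_one t)]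
      simp [map_div₀, Complex.conj_ofReal, map_ofNat]
    have hexpconj : (starRingEnd ℂ) (Complex.exp (2 * (π : ℂ) * Complex.I * ((κ t : ℝ) : ℂ)))
        = Complex.exp (-(2 * (π : ℂ) * Complex.I * ((κ t : ℝ) : ℂ))) := by
      rw [← Complex.exp_conj]
      congr 1
      simp [map_mul, Complex.conj_I, Complex.conj_ofReal, map_ofNat]
    have hsplit : (2 * (π : ℂ) * Complex.I) * ((κ t + κ (-t) : ℝ) : ℂ)
        = 2 * (π : ℂ) * Complex.I * ((κ t : ℝ) : ℂ)
          + 2 * (π : ℂ) * Complex.I * ((κ (-t) : ℝ) : ℂ) := by push_cast; ring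
    rw [hsplit, Complex.exp_add, hconjX, hexpconj, ← Complex.exp_add]
    simp
  have hκf : ∀ t : ℝ, AnalyticAt ℝ (fun t : ℝ => κ t + κ (-t)) t := fun t =>
    (hκa t).add ((hκa (-t)).comp analyticAt_id.neg)
  have hH1 := exp_one_everywhere hκf (2 * (π : ℂ) * Complex.I) hevH
  have hcne : (2 * (π : ℂ) * Complex.I) ≠ 0 :=
    mul_ne_zero (mul_ne_zero two_ne_zero (Complex.ofReal_ne_zero.mpr Real.pi_ne_zero))
      Complex.I_ne_zero
  have hdiffH : Differentiable ℝ (fun t : ℝ => κ t + κ (-t)) := fun t =>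
    ((hκa t).differentiableAt).add (((hκa (-t)).differentiableAt).comp t
      (differentiable_neg t))
  have hHderiv : ∀ t : ℝ, deriv (fun t : ℝ => κ t + κ (-t)) t = 0 := by
    intro t
    have hd : HasDerivAt (fun t : ℝ => κ t + κ (-t))
        (deriv κ t + deriv κ (-t) * (-1)) t :=
      ((hκa t).differentiableAt.hasDerivAt).add
        (((hκa (-t)).differentiableAt.hasDerivAt).comp t (hasDerivAt_neg' t))
    have h0 := deriv_zero_of_exp_one hcne hH1 hd
    rw [hd.deriv, h0]
  have hconst := is_const_of_deriv_eq_zero hdiffH hHderiv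
  intro t
  have hc := hconst t 0
  simp only [neg_zero] at hc
  rw [hκ0] at hc
  linarith
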